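/- arXiv:1303.0593 — 4 statements merged into one kernel-verified Lean document; each statement's English description precedes it below -/
import Mathlib

section
/- Let 0<s<1, n ≥ 1, m ≥ n, N = m+n, and let p₁ = (1/√2)(e₁^{(m)}, e₁^{(n)}) where e₁ denotes the first standard basis vector. Let E₁ = { (y,z) ∈ ℝ^m × ℝ^n : |z| > |y| }. Then for every δ > 0, the integral over ℝ^N \ B(p₁, δ) of (χ_{E₁}(x) − χ_{E₁^c}(x))/|x − p₁|^{N+s} dx is less than or equal to 0. -/
open MeasureTheory Set

namespace Stmt2Aux

variable {m n : ℕ}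

def cs (n : ℕ) (hmn : n ≤ m) : Fin m ⊕ Fin n → Fin m ⊕ Fin n
  | .inl j => if h : (j : ℕ) < n then .inr ⟨j, h⟩ else .inl j
  | .inr k => .inl (Fin.castLE hmn k)

lemma cs_invol (hmn : n ≤ m) : Function.Involutive (cs n hmn) := by
  rintro (j | k)
  · by_cases h : (j : ℕ) < n
    · simp [cs, h, Fin.ext_iff]
    · simp [cs, h]
  · simp [cs, k.isLt, Fin.ext_iff]

def e (hmn : n ≤ m) : Fin (m + n) ≃ Fin (m + n) :=
  finSumFinEquiv.symm.trans
    ((Function.Involutive.toPerm _ (cs_invol hmn)).trans finSumFinEquiv)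

lemma e_symm_castAdd (hmn : n ≤ m) (j : Fin m) :
    (e hmn).symm (Fin.castAdd n j) =
      if h : (j : ℕ) < n then Fin.natAdd m ⟨j, h⟩ else Fin.castAdd n j := by
  rw [e]
  simp only [Equiv.symm_trans_apply, Equiv.symm_symm, Function.Involutive.toPerm_symm,
    finSumFinEquiv_symm_apply_castAdd, Function.Involutive.coe_toPerm]
  by_cases h : (j : ℕ) < n
  · simp [cs, h]
  · simp [cs, h]

lemma e_symm_natAdd (hmn : n ≤ m) (k : Fin n) :
    (e hmn).symm (Fin.natAdd m k) = Fin.castAdd n (Fin.castLE hmn k) := by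
  rw [e]
  simp only [Equiv.symm_trans_apply, Equiv.symm_symm, Function.Involutive.toPerm_symm,
    finSumFinEquiv_symm_apply_natAdd, Function.Involutive.coe_toPerm]
  simp [cs]

lemma e_symm_invol (hmn : n ≤ m) : Function.Involutive (e hmn).symm := by
  intro i
  rw [e]
  simp only [Equiv.symm_trans_apply, Equiv.symm_symm, Function.Involutive.toPerm_symm,
    Function.Involutive.coe_toPerm, Equiv.symm_apply_apply, cs_invol hmn _,
    Equiv.apply_symm_apply]

lemma sum_castLE_le (hmn : n ≤ m) (g : Fin m → ℝ) (hg : ∀ j, 0 ≤ g j) :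
    ∑ k : Fin n, g (Fin.castLE hmn k) ≤ ∑ j : Fin m, g j := by
  have h1 : ∑ k : Fin n, g (Fin.castLE hmn k)
      = ∑ j ∈ Finset.univ.map (Fin.castLEEmb hmn), g j := by
    rw [Finset.sum_map]; rfl
  rw [h1]
  exact Finset.sum_le_sum_of_subset_of_nonneg (Finset.subset_univ _) (fun i _ _ => hg i)

end Stmt2Aux

/-- For the symmetric cone `E₁ = {|z| > |y|}` in `ℝ^m × ℝ^n` with `n ≤ m`, the truncated
    nonlocal mean curvature integral at the point `p₁ = (e₁/√2, e₁/√2)` is nonpositive. -/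
theorem stmt2 (m n : ℕ) (hn : 1 ≤ n) (hmn : n ≤ m) (s : ℝ) (hs0 : 0 < s) (hs1 : s < 1)
    (E : Set (EuclideanSpace ℝ (Fin (m + n))))
    (hE : E = {x | Real.sqrt (∑ j : Fin m, x (Fin.castAdd n j) ^ 2) <
                   Real.sqrt (∑ j : Fin n, x (Fin.natAdd m j) ^ 2)})
    (p : EuclideanSpace ℝ (Fin (m + n)))
    (hp : ∀ i : Fin (m + n),
      p i = if i = Fin.castAdd n ⟨0, lt_of_lt_of_le hn hmn⟩ ∨ i = Fin.natAdd m ⟨0, hn⟩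
        then 1 / Real.sqrt 2 else 0)
    (δ : ℝ) (hδ : 0 < δ) :
    (∫ x in {x : EuclideanSpace ℝ (Fin (m + n)) | δ ≤ dist x p},
        (E.indicator (fun _ => (1:ℝ)) x - Eᶜ.indicator (fun _ => (1:ℝ)) x)
          / dist x p ^ ((m + n : ℝ) + s)) ≤ 0 := by
  classical
  set r : ℝ := (m + n : ℝ) + s with hr_def
  have hr0 : 0 < r := by positivity
  set Ω : Set (EuclideanSpace ℝ (Fin (m + n))) := {x | δ ≤ dist x p} with hΩ_def
  have hΩmeas : MeasurableSet Ω :=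
    (isClosed_le continuous_const (continuous_id.dist continuous_const)).measurableSet
  have hEmeas : MeasurableSet E := by
    rw [hE]
    exact (isOpen_lt (by fun_prop) (by fun_prop)).measurableSet
  -- the reflection T
  set T := LinearIsometryEquiv.piLpCongrLeft 2 ℝ ℝ (Stmt2Aux.e hmn) with hT_def
  have hTapp : ∀ (x : EuclideanSpace ℝ (Fin (m + n))) (i : Fin (m + n)),
      T x i = x ((Stmt2Aux.e hmn).symm i) := fun x i => rfl
  -- T fixes p
  have he0 : (Stmt2Aux.e hmn).symm (Fin.castAdd n ⟨0, lt_of_lt_of_le hn hmn⟩) =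
      Fin.natAdd m ⟨0, hn⟩ := by
    rw [Stmt2Aux.e_symm_castAdd hmn, dif_pos (show ((0:ℕ)) < n from hn)]
  have he1 : (Stmt2Aux.e hmn).symm (Fin.natAdd m ⟨0, hn⟩) =
      Fin.castAdd n ⟨0, lt_of_lt_of_le hn hmn⟩ := by
    rw [Stmt2Aux.e_symm_natAdd hmn]
    rfl
  have hTp : T p = p := by
    refine PiLp.ext fun i => ?_
    rw [hTapp, hp, hp]
    apply if_congr _ rfl rfl
    constructor
    · rintro (h | h)
      · exact Or.inr ((Stmt2Aux.e hmn).symm.injective (h.trans he1.symm))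
      · exact Or.inl ((Stmt2Aux.e hmn).symm.injective (h.trans he0.symm))
    · rintro (h | h)
      · exact Or.inr (by rw [h, he0])
      · exact Or.inl (by rw [h, he1])
  have hTdist : ∀ x, dist (T x) p = dist x p := by
    intro x
    conv_lhs => rw [← hTp]
    exact T.dist_map x p
  -- T maps E into the complement of E
  have hTE : ∀ x, x ∈ E → T x ∉ E := by
    intro x hx
    rw [hE] at hx ⊢
    simp only [mem_setOf_eq, not_lt] at hx ⊢
    set A := ∑ j : Fin m, x (Fin.castAdd n j) ^ 2 with hA
    set B := ∑ j : Fin n, x (Fin.natAdd m j) ^ 2 with hB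
    have hAB : A < B := by
      by_contra hc
      exact absurd (Real.sqrt_le_sqrt (not_lt.mp hc)) (not_le.mpr hx)
    have hB'A : (∑ j : Fin n, T x (Fin.natAdd m j) ^ 2) ≤ A := by
      have h1 : ∀ k : Fin n, T x (Fin.natAdd m k) ^ 2 =
          (fun j : Fin m => x (Fin.castAdd n j) ^ 2) (Fin.castLE hmn k) := by
        intro k
        rw [hTapp, Stmt2Aux.e_symm_natAdd hmn]
      rw [Finset.sum_congr rfl fun k _ => h1 k]
      exact Stmt2Aux.sum_castLE_le hmn (fun j => x (Fin.castAdd n j) ^ 2)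
        fun j => sq_nonneg _
    have hBA' : B ≤ ∑ j : Fin m, T x (Fin.castAdd n j) ^ 2 := by
      have h1 : ∀ k : Fin n, x (Fin.natAdd m k) ^ 2 =
          (fun j : Fin m => T x (Fin.castAdd n j) ^ 2) (Fin.castLE hmn k) := by
        intro k
        show x (Fin.natAdd m k) ^ 2 = T x (Fin.castAdd n (Fin.castLE hmn k)) ^ 2
        have hk : ((Fin.castLE hmn k : Fin m) : ℕ) < n := k.isLt
        rw [hTapp, Stmt2Aux.e_symm_castAdd hmn, dif_pos hk]
        rfl
      rw [hB, Finset.sum_congr rfl fun k _ => h1 k]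
      exact Stmt2Aux.sum_castLE_le hmn (fun j => T x (Fin.castAdd n j) ^ 2)
        fun j => sq_nonneg _
    exact Real.sqrt_le_sqrt (le_trans hB'A (le_trans hAB.le hBA'))
  -- integrability of the kernel on Ω
  have hfrk : ((Module.finrank ℝ (EuclideanSpace ℝ (Fin (m + n)))) : ℝ) < r := by
    rw [finrank_euclideanSpace_fin, hr_def]
    push_cast
    linarith
  have hJB : Integrable (fun x : EuclideanSpace ℝ (Fin (m + n)) =>
      ((1 : ℝ) + ‖x‖ ^ 2) ^ (-r / 2)) := integrable_rpow_neg_one_add_norm_sq hfrk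
  have hJBp : Integrable (fun x : EuclideanSpace ℝ (Fin (m + n)) =>
      ((1 : ℝ) + ‖x - p‖ ^ 2) ^ (-r / 2)) := by
    have := ((measurePreserving_sub_right
        (volume : Measure (EuclideanSpace ℝ (Fin (m + n)))) p).integrable_comp
      hJB.aestronglyMeasurable).mpr hJB
    exact this
  set C : ℝ := (1 + δ⁻¹ ^ 2) ^ (r / 2) with hC_def
  have hfmeas : Measurable fun x : EuclideanSpace ℝ (Fin (m + n)) =>
      (dist x p ^ r)⁻¹ := by fun_prop
  have hIntf : IntegrableOn (fun x => (dist x p ^ r)⁻¹) Ω := by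
    refine Integrable.mono' ((hJBp.const_mul C).integrableOn)
      hfmeas.aestronglyMeasurable.restrict ?_
    filter_upwards [ae_restrict_mem hΩmeas] with x hx
    have ht0 : 0 < dist x p := lt_of_lt_of_le hδ hx
    set t : ℝ := dist x p with ht_def
    have htr : 0 < t ^ r := Real.rpow_pos_of_pos ht0 r
    have hbase : 0 < 1 + t ^ 2 := by positivity
    have hxp : ‖x - p‖ = t := (dist_eq_norm x p).symm
    rw [hxp, Real.norm_eq_abs, abs_of_nonneg (inv_nonneg.mpr htr.le)]
    have hone : 1 ≤ δ⁻¹ * t := by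
      rw [← inv_mul_cancel₀ hδ.ne']
      exact mul_le_mul_of_nonneg_left hx (inv_nonneg.mpr hδ.le)
    have h1 : (1 : ℝ) ≤ δ⁻¹ ^ 2 * t ^ 2 := by
      rw [← mul_pow]; nlinarith
    have key1 : 1 + t ^ 2 ≤ (1 + δ⁻¹ ^ 2) * t ^ 2 := by nlinarith
    have key2 : (1 + t ^ 2) ^ (r / 2) ≤ C * t ^ r := by
      calc (1 + t ^ 2) ^ (r / 2) ≤ ((1 + δ⁻¹ ^ 2) * t ^ 2) ^ (r / 2) :=
            Real.rpow_le_rpow hbase.le key1 (by positivity)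
        _ = C * (t ^ 2) ^ (r / 2) := Real.mul_rpow (by positivity) (sq_nonneg t)
        _ = C * t ^ r := by
            congr 1
            rw [← Real.rpow_natCast t 2, ← Real.rpow_mul ht0.le]
            norm_num
            ring_nf
    have hCpos : 0 < C := by positivity
    rw [neg_div, Real.rpow_neg hbase.le]
    have hfrac : (1 + t ^ 2) ^ (r / 2) / C ≤ t ^ r := by
      rw [div_le_iff₀ hCpos]
      linarith [key2]
    calc (t ^ r)⁻¹ ≤ ((1 + t ^ 2) ^ (r / 2) / C)⁻¹ :=
          inv_anti₀ (by positivity) hfrac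
      _ = C * ((1 + t ^ 2) ^ (r / 2))⁻¹ := by
          rw [inv_div, div_eq_mul_inv]
  -- integrability of each indicator term
  have key : ∀ g : EuclideanSpace ℝ (Fin (m + n)) → ℝ, Measurable g →
      (∀ x, 0 ≤ g x) → (∀ x, g x ≤ 1) →
      IntegrableOn (fun x => g x / dist x p ^ r) Ω := by
    intro g hg hg0 hg1
    refine hIntf.mono' ((hg.div (by fun_prop)).aestronglyMeasurable.restrict) ?_
    filter_upwards with x
    have hd : (0:ℝ) ≤ dist x p ^ r := Real.rpow_nonneg dist_nonneg r
    rw [Real.norm_eq_abs, abs_div, abs_of_nonneg (hg0 x), abs_of_nonneg hd]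
    have := mul_le_mul_of_nonneg_right (hg1 x) (inv_nonneg.mpr hd)
    simpa [div_eq_mul_inv] using this
  have hmeasE : Measurable (E.indicator (fun _ => (1:ℝ))) :=
    measurable_const.indicator hEmeas
  have hmeasEc : Measurable (Eᶜ.indicator (fun _ => (1:ℝ))) :=
    measurable_const.indicator hEmeas.compl
  have hind0 : ∀ (S : Set (EuclideanSpace ℝ (Fin (m + n)))) x,
      0 ≤ S.indicator (fun _ => (1:ℝ)) x := fun S x =>
    indicator_nonneg (fun _ _ => zero_le_one) x
  have hind1 : ∀ (S : Set (EuclideanSpace ℝ (Fin (m + n)))) x,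
      S.indicator (fun _ => (1:ℝ)) x ≤ 1 := fun S x => by
    by_cases h : x ∈ S <;> simp [h]
  have hIntE : IntegrableOn
      (fun x => E.indicator (fun _ => (1:ℝ)) x / dist x p ^ r) Ω :=
    key _ hmeasE (hind0 E) (hind1 E)
  have hIntEc : IntegrableOn
      (fun x => Eᶜ.indicator (fun _ => (1:ℝ)) x / dist x p ^ r) Ω :=
    key _ hmeasEc (hind0 Eᶜ) (hind1 Eᶜ)
  have hIntET : IntegrableOn
      (fun x => E.indicator (fun _ => (1:ℝ)) (T x) / dist x p ^ r) Ω :=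
    key _ (hmeasE.comp T.toHomeomorph.measurable) (fun x => hind0 E (T x))
      (fun x => hind1 E (T x))
  -- change of variables
  have hTemb : MeasurableEmbedding (T : EuclideanSpace ℝ (Fin (m + n)) →
      EuclideanSpace ℝ (Fin (m + n))) := T.toHomeomorph.measurableEmbedding
  have hpre : (T : EuclideanSpace ℝ (Fin (m + n)) → EuclideanSpace ℝ (Fin (m + n)))
      ⁻¹' Ω = Ω := by
    ext x
    simp only [mem_preimage, hΩ_def, mem_setOf_eq, hTdist]
  have hchange : ∫ x in Ω, E.indicator (fun _ => (1:ℝ)) (T x) / dist x p ^ r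
      = ∫ y in Ω, E.indicator (fun _ => (1:ℝ)) y / dist y p ^ r := by
    have h := T.measurePreserving.setIntegral_preimage_emb hTemb
      (fun y => E.indicator (fun _ => (1:ℝ)) y / dist y p ^ r) Ω
    rw [hpre] at h
    simp_rw [hTdist] at h
    exact h
  -- pointwise comparison
  have hptwise : ∀ x ∈ Ω, E.indicator (fun _ => (1:ℝ)) (T x) / dist x p ^ r
      ≤ Eᶜ.indicator (fun _ => (1:ℝ)) x / dist x p ^ r := by
    intro x hx
    have hd : (0:ℝ) < dist x p ^ r :=
      Real.rpow_pos_of_pos (lt_of_lt_of_le hδ hx) r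
    have hcomp : E.indicator (fun _ => (1:ℝ)) (T x) ≤ Eᶜ.indicator (fun _ => (1:ℝ)) x := by
      by_cases hxE : T x ∈ E
      · have hxc : x ∈ Eᶜ := fun hxe => hTE x hxe hxE
        simp [indicator_of_mem hxE, indicator_of_mem hxc]
      · simpa [indicator_of_notMem hxE] using hind0 Eᶜ x
    gcongr
  -- conclusion
  have hsplit : (∫ x in Ω,
      (E.indicator (fun _ => (1:ℝ)) x - Eᶜ.indicator (fun _ => (1:ℝ)) x) / dist x p ^ r)
      = (∫ x in Ω, E.indicator (fun _ => (1:ℝ)) x / dist x p ^ r)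
        - ∫ x in Ω, Eᶜ.indicator (fun _ => (1:ℝ)) x / dist x p ^ r := by
    simp_rw [sub_div]
    exact integral_sub hIntE hIntEc
  rw [hsplit, sub_nonpos, ← hchange]
  exact setIntegral_mono_on hIntET hIntEc hΩmeas hptwise
end

section
/- Let 0 < β₂ < β₁ < π/2 and set θ = β₁ − β₂. Then for all t with 1 < t ≤ 1/sin(β₁), one has arccos(sin(β₁)·t) + θ < arccos(sin(β₂)·t). -/
open Real

/-- Strict inequality `arccos(sin(β₁) t) + θ < arccos(sin(β₂) t)` for `1 < t ≤ 1/sin β₁`. -/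
theorem stmt3 (β₁ β₂ : ℝ) (hβ₂ : 0 < β₂) (hβ : β₂ < β₁) (hβ₁ : β₁ < π / 2)
    (θ : ℝ) (hθ : θ = β₁ - β₂)
    (t : ℝ) (ht1 : 1 < t) (ht2 : t ≤ 1 / Real.sin β₁) :
    Real.arccos (Real.sin β₁ * t) + θ < Real.arccos (Real.sin β₂ * t) := by
  have hpi := Real.pi_pos
  have hs1 : 0 < Real.sin β₁ := Real.sin_pos_of_pos_of_lt_pi (by linarith) (by linarith)
  have hc1 : 0 < Real.cos β₁ := Real.cos_pos_of_mem_Ioo ⟨by linarith, hβ₁⟩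
  have hθ0 : 0 < θ := by linarith
  have hθlt : θ < π / 2 := by linarith
  have hsθ : 0 < Real.sin θ := Real.sin_pos_of_pos_of_lt_pi hθ0 (by linarith)
  have hs2 : 0 < Real.sin β₂ := Real.sin_pos_of_pos_of_lt_pi hβ₂ (by linarith)
  have h21 : Real.sin β₂ < Real.sin β₁ := by
    apply Real.strictMonoOn_sin ⟨by linarith, by linarith⟩ ⟨by linarith, le_of_lt hβ₁⟩ hβ
  have ht0 : 0 < t := by linarith
  have hst1 : Real.sin β₁ * t ≤ 1 := by
    rw [le_div_iff₀ hs1] at ht2; linarith [ht2]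
  have hst1pos : 0 < Real.sin β₁ * t := by positivity
  have hst2pos : 0 < Real.sin β₂ * t := by positivity
  have hst2 : Real.sin β₂ * t < 1 :=
    lt_of_lt_of_le (by nlinarith) hst1
  set B := Real.arccos (Real.sin β₁ * t) with hB
  have hB0 : 0 ≤ B := Real.arccos_nonneg _
  have hBlt : B < π / 2 := by
    rw [hB, Real.arccos_lt_pi_div_two]; exact hst1pos
  have hs2eq : Real.sin β₂ = Real.sin β₁ * Real.cos θ - Real.cos β₁ * Real.sin θ := by
    have hb2 : β₂ = β₁ - θ := by linarith
    rw [hb2, Real.sin_sub]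
  have key : Real.sin β₂ * t < Real.cos (B + θ) := by
    rw [Real.cos_add, hB, Real.cos_arccos (by linarith) hst1, Real.sin_arccos]
    have hsqrt : Real.sqrt (1 - (Real.sin β₁ * t) ^ 2) < t * Real.cos β₁ := by
      rw [Real.sqrt_lt' (by positivity)]
      have hpy := Real.sin_sq_add_cos_sq β₁
      have ht2' : 1 < t ^ 2 := by nlinarith
      nlinarith [hpy, ht2']
    nlinarith
  have hmem1 : B + θ ∈ Set.Icc 0 π := ⟨by linarith, by linarith⟩
  have hmem2 : Real.arccos (Real.sin β₂ * t) ∈ Set.Icc 0 π :=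
    ⟨Real.arccos_nonneg _, Real.arccos_le_pi _⟩
  have hcoslt : Real.cos (Real.arccos (Real.sin β₂ * t)) < Real.cos (B + θ) := by
    rw [Real.cos_arccos (by linarith) (le_of_lt hst2)]; exact key
  exact (Real.strictAntiOn_cos.lt_iff_gt hmem2 hmem1).mp hcoslt
end

section
/- Let 0 < β₂ < β₁ < π/2, θ = β₁ − β₂, and t ≥ 1. If φ ∈ ℝ satisfies |sin(φ + θ)| > sin(β₁)·t, then |sin(φ)| > sin(β₂)·t. -/
open Real

/-- If `|sin(φ + θ)| > sin(β₁) t` with `θ = β₁ - β₂` and `t ≥ 1`, then `|sin φ| > sin(β₂) t`. -/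
theorem stmt4 (β₁ β₂ : ℝ) (hβ₂ : 0 < β₂) (hβ : β₂ < β₁) (hβ₁ : β₁ < π / 2)
    (θ : ℝ) (hθ : θ = β₁ - β₂) (t : ℝ) (ht : 1 ≤ t) (φ : ℝ)
    (h : Real.sin β₁ * t < |Real.sin (φ + θ)|) :
    Real.sin β₂ * t < |Real.sin φ| := by
  have hpi := Real.pi_pos
  have hθ0 : 0 < θ := by linarith
  have hcθ : 0 < Real.cos θ := Real.cos_pos_of_mem_Ioo ⟨by linarith, by linarith⟩
  have hsθ : 0 < Real.sin θ := Real.sin_pos_of_pos_of_lt_pi hθ0 (by linarith)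
  have hcβ₁ : 0 < Real.cos β₁ := Real.cos_pos_of_mem_Ioo ⟨by linarith, hβ₁⟩
  have hsβ₁ : 0 < Real.sin β₁ := Real.sin_pos_of_pos_of_lt_pi (by linarith) (by linarith)
  have hs1 : Real.sin β₁ < |Real.sin (φ + θ)| := by nlinarith
  have hcos : |Real.cos (φ + θ)| < Real.cos β₁ := by
    have h1 : Real.sin (φ + θ) ^ 2 + Real.cos (φ + θ) ^ 2 = 1 := Real.sin_sq_add_cos_sq _
    have h2 : Real.sin β₁ ^ 2 + Real.cos β₁ ^ 2 = 1 := Real.sin_sq_add_cos_sq _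
    have h3 : |Real.sin (φ + θ)| ^ 2 = Real.sin (φ + θ) ^ 2 := sq_abs _
    have h4 : |Real.cos (φ + θ)| ^ 2 = Real.cos (φ + θ) ^ 2 := sq_abs _
    nlinarith [abs_nonneg (Real.cos (φ + θ))]
  have hsplit : Real.sin φ = Real.sin (φ + θ) * Real.cos θ - Real.cos (φ + θ) * Real.sin θ := by
    have := Real.sin_sub (φ + θ) θ
    simpa using this
  have hβ₂eq : Real.sin β₂ = Real.sin β₁ * Real.cos θ - Real.cos β₁ * Real.sin θ := by
    have h5 := Real.sin_sub β₁ θ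
    rw [hθ] at h5
    simp at h5
    rw [hθ]
    linarith
  have habs : |Real.sin (φ + θ)| * Real.cos θ - |Real.cos (φ + θ)| * Real.sin θ ≤ |Real.sin φ| := by
    rw [hsplit]
    calc |Real.sin (φ + θ)| * Real.cos θ - |Real.cos (φ + θ)| * Real.sin θ
        = |Real.sin (φ + θ) * Real.cos θ| - |Real.cos (φ + θ) * Real.sin θ| := by
          rw [abs_mul, abs_mul, abs_of_pos hcθ, abs_of_pos hsθ]
      _ ≤ |Real.sin (φ + θ) * Real.cos θ - Real.cos (φ + θ) * Real.sin θ| :=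
          abs_sub_abs_le_abs_sub _ _
  rw [hβ₂eq]
  nlinarith [mul_pos (sub_pos.mpr h) hcθ, mul_pos (sub_pos.mpr hcos) hsθ,
    mul_nonneg (mul_nonneg (by linarith : (0:ℝ) ≤ t - 1) hcβ₁.le) hsθ.le]
end

section
/- Let 0 < s < 1, N ≥ 1, p ∈ ℝ^N, 0 < δ < 1/2, and let E ⊆ ℝ^N be measurable. Suppose F ⊆ ℝ^N is measurable with p.v. ∫_{ℝ^N} (χ_F(x) − χ_{F^c}(x))/|x|^{N+s} dx well defined. If F = { (y,z) ∈ ℝ^m × ℝ^n : |z + e₁| > 1 } with N = m+n and e₁ the first standard basis vector of ℝ^n, then p.v. ∫_{ℝ^N} (χ_F(x) − χ_{F^c}(x))/|x|^{N+s} dx ≥ ∫_{{x = (y,z) : |z₁| > 2}} |x|^{−(N+s)} dx > 0, where z₁ is the first coordinate of z. -/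
open MeasureTheory Set Filter

section AuxStmt19

lemma aux19_coord_le {N : ℕ} (k : Fin N) (x : EuclideanSpace ℝ (Fin N)) : |x k| ≤ ‖x‖ := by
  rw [EuclideanSpace.norm_eq, ← Real.sqrt_sq_eq_abs]
  apply Real.sqrt_le_sqrt
  calc (x k) ^ 2 = ‖x k‖ ^ 2 := by rw [Real.norm_eq_abs, sq_abs]
    _ ≤ ∑ i, ‖x i‖ ^ 2 :=
        Finset.single_le_sum (f := fun i => ‖x i‖ ^ 2) (fun i _ => sq_nonneg _)
          (Finset.mem_univ k)

lemma aux19_null {N : ℕ} (k : Fin N) :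
    (volume : Measure (EuclideanSpace ℝ (Fin N))) {x | x k = 0} = 0 := by
  have h : {x : EuclideanSpace ℝ (Fin N) | x k = 0}
      = ((LinearMap.ker (EuclideanSpace.projₗ (𝕜 := ℝ) k) : Submodule ℝ (EuclideanSpace ℝ (Fin N))) : Set (EuclideanSpace ℝ (Fin N))) := by
    ext x
    simp [LinearMap.mem_ker, EuclideanSpace.projₗ]
  rw [h]
  refine Measure.addHaar_submodule _ _ (fun htop => ?_)
  have h1 : EuclideanSpace.single k (1 : ℝ) ∈ LinearMap.ker (EuclideanSpace.projₗ (𝕜 := ℝ) k) :=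
    htop ▸ Submodule.mem_top
  simp [LinearMap.mem_ker, EuclideanSpace.projₗ] at h1

lemma aux19_tail {N : ℕ} {r δ : ℝ} (hr : (N : ℝ) < r) (hδ : 0 < δ) :
    IntegrableOn (fun x : EuclideanSpace ℝ (Fin N) => ‖x‖ ^ (-r))
      {x : EuclideanSpace ℝ (Fin N) | δ ≤ ‖x‖} := by
  have hr0 : 0 ≤ r := le_trans (Nat.cast_nonneg N) hr.le
  have hfin : (Module.finrank ℝ (EuclideanSpace ℝ (Fin N)) : ℝ) < r := by
    rwa [finrank_euclideanSpace_fin]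
  have h1 : Integrable (fun x : EuclideanSpace ℝ (Fin N) => (1 + ‖x‖) ^ (-r)) :=
    integrable_one_add_norm hfin
  set C : ℝ := ((1 + δ) / δ) ^ r with hC
  have hC0 : 0 < C := Real.rpow_pos_of_pos (by positivity) r
  have h2 : IntegrableOn (fun x : EuclideanSpace ℝ (Fin N) => C * (1 + ‖x‖) ^ (-r))
      {x : EuclideanSpace ℝ (Fin N) | δ ≤ ‖x‖} := (h1.const_mul C).integrableOn
  refine Integrable.mono' h2 (measurable_norm.pow measurable_const).aestronglyMeasurable ?_
  refine (ae_restrict_iff' (measurableSet_le measurable_const measurable_norm)).2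
    (Eventually.of_forall fun x hx => ?_)
  have hx' : δ ≤ ‖x‖ := hx
  have hx0 : 0 < ‖x‖ := lt_of_lt_of_le hδ hx'
  have ha : (0 : ℝ) < ‖x‖ ^ r := Real.rpow_pos_of_pos hx0 r
  have hb : (0 : ℝ) < (1 + ‖x‖) ^ r := Real.rpow_pos_of_pos (by positivity) r
  have key : (1 + ‖x‖) ^ r ≤ C * ‖x‖ ^ r := by
    have h3 : (1 + ‖x‖) ≤ ((1 + δ) / δ) * ‖x‖ := by
      rw [div_mul_eq_mul_div, le_div_iff₀ hδ]
      nlinarith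
    calc (1 + ‖x‖) ^ r ≤ (((1 + δ) / δ) * ‖x‖) ^ r :=
          Real.rpow_le_rpow (by positivity) h3 hr0
      _ = C * ‖x‖ ^ r := Real.mul_rpow (by positivity) (norm_nonneg x)
  rw [Real.norm_eq_abs, abs_of_nonneg (Real.rpow_nonneg (norm_nonneg _) _),
    Real.rpow_neg (norm_nonneg x), Real.rpow_neg (by positivity : (0:ℝ) ≤ 1 + ‖x‖)]
  have h4 : (1 + ‖x‖) ^ r / C ≤ ‖x‖ ^ r := by
    rw [div_le_iff₀ hC0]
    linarith [key]
  calc (‖x‖ ^ r)⁻¹ ≤ ((1 + ‖x‖) ^ r / C)⁻¹ := by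
        apply inv_anti₀ (by positivity) h4
    _ = C * ((1 + ‖x‖) ^ r)⁻¹ := by rw [inv_div, div_eq_mul_inv]

end AuxStmt19

set_option maxHeartbeats 2000000 in
/-- For the set `F = {(y,z) : |z + e₁| > 1}`, the principal value of
    `(χ_F - χ_{F^c})/|x|^{N+s}` at the origin is bounded below by the positive integral
    of `|x|^{-(N+s)}` over the region `{|z₁| > 2}`. -/
theorem stmt19 (m n : ℕ) (hm : 1 ≤ m) (hn : 1 ≤ n) (s : ℝ) (hs0 : 0 < s) (hs1 : s < 1)
    (F : Set (EuclideanSpace ℝ (Fin (m + n))))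
    (hF : F = {x | 1 < Real.sqrt (∑ j : Fin n,
        (x (Fin.natAdd m j) + (if j = (⟨0, hn⟩ : Fin n) then 1 else 0)) ^ 2)})
    (I : ℝ)
    (hpv : Tendsto (fun δ : ℝ =>
        ∫ x in {x : EuclideanSpace ℝ (Fin (m + n)) | δ ≤ ‖x‖},
          (F.indicator (fun _ => (1:ℝ)) x - Fᶜ.indicator (fun _ => (1:ℝ)) x)
            / ‖x‖ ^ ((m + n : ℝ) + s))
      (nhdsWithin 0 (Ioi 0)) (nhds I)) :
    (∫ x in {x : EuclideanSpace ℝ (Fin (m + n)) | 2 < |x (Fin.natAdd m ⟨0, hn⟩)|},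
        ‖x‖ ^ (-((m + n : ℝ) + s))) ≤ I
    ∧ 0 < ∫ x in {x : EuclideanSpace ℝ (Fin (m + n)) | 2 < |x (Fin.natAdd m ⟨0, hn⟩)|},
        ‖x‖ ^ (-((m + n : ℝ) + s)) := by
  classical
  set j0 : Fin n := ⟨0, hn⟩ with hj0
  set k : Fin (m + n) := Fin.natAdd m j0 with hk
  set r : ℝ := (m + n : ℝ) + s with hr
  have hrN : ((m + n : ℕ) : ℝ) < r := by
    rw [hr]; push_cast; linarith
  have hr0 : (0 : ℝ) ≤ r := le_trans (Nat.cast_nonneg _) hrN.le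
  -- the reflection negating coordinate k
  set σ : EuclideanSpace ℝ (Fin (m + n)) ≃ₗᵢ[ℝ] EuclideanSpace ℝ (Fin (m + n)) := LinearIsometryEquiv.piLpCongrRight 2
    (fun i : Fin (m + n) =>
      if i = k then (LinearIsometryEquiv.neg ℝ : ℝ ≃ₗᵢ[ℝ] ℝ) else LinearIsometryEquiv.refl ℝ ℝ)
    with hσ
  have hσ_apply : ∀ (x : EuclideanSpace ℝ (Fin (m + n))) (i : Fin (m + n)), σ x i = if i = k then -(x i) else x i := by
    intro x i
    rcases eq_or_ne i k with h | h
    · subst h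
      simp [hσ, LinearIsometryEquiv.piLpCongrRight_apply, PiLp.toLp_apply]
    · simp [hσ, LinearIsometryEquiv.piLpCongrRight_apply, PiLp.toLp_apply, h]
  have hσnorm : ∀ x : EuclideanSpace ℝ (Fin (m + n)), ‖σ x‖ = ‖x‖ := fun x => σ.norm_map x
  -- the integrand
  set f : EuclideanSpace ℝ (Fin (m + n)) → ℝ := fun x =>
    (F.indicator (fun _ => (1:ℝ)) x - Fᶜ.indicator (fun _ => (1:ℝ)) x) / ‖x‖ ^ r with hf
  set g : EuclideanSpace ℝ (Fin (m + n)) → ℝ := fun x =>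
    F.indicator (fun _ => (1:ℝ)) x - Fᶜ.indicator (fun _ => (1:ℝ)) x with hg
  set φ : EuclideanSpace ℝ (Fin (m + n)) → ℝ := fun x => ‖x‖ ^ (-r) with hφ
  have hg1 : ∀ x ∈ F, g x = 1 := by
    intro x hx
    have hx' : x ∉ Fᶜ := fun h => h hx
    simp only [hg, indicator_of_mem hx, indicator_of_notMem hx']
    norm_num
  have hg2 : ∀ x ∉ F, g x = -1 := by
    intro x hx
    have hx' : x ∈ Fᶜ := hx
    simp only [hg, indicator_of_notMem hx, indicator_of_mem hx']
    norm_num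
  have hgabs : ∀ x : EuclideanSpace ℝ (Fin (m + n)), |g x| ≤ 1 := by
    intro x
    by_cases hx : x ∈ F
    · rw [hg1 x hx]; norm_num
    · rw [hg2 x hx]; norm_num
  -- continuity / measurability
  have hcont : Continuous (fun x : EuclideanSpace ℝ (Fin (m + n)) => Real.sqrt (∑ j : Fin n,
      (x (Fin.natAdd m j) + (if j = j0 then (1:ℝ) else 0)) ^ 2)) := by
    apply Real.continuous_sqrt.comp
    apply continuous_finset_sum
    intro j _
    exact (((EuclideanSpace.proj (Fin.natAdd m j) : EuclideanSpace ℝ (Fin (m + n)) →L[ℝ] ℝ).continuous).add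
      continuous_const).pow 2
  have hFopen : IsOpen F := by
    rw [hF]
    exact isOpen_lt continuous_const hcont
  have hFmeas : MeasurableSet F := hFopen.measurableSet
  have hproj_cont : Continuous (fun x : EuclideanSpace ℝ (Fin (m + n)) => x k) :=
    (EuclideanSpace.proj k : EuclideanSpace ℝ (Fin (m + n)) →L[ℝ] ℝ).continuous
  set S : Set (EuclideanSpace ℝ (Fin (m + n))) := {x | 2 < |x k|} with hS
  have hSmeas : MeasurableSet S :=
    (isOpen_lt continuous_const (continuous_abs.comp hproj_cont)).measurableSet
  have hg_meas : Measurable g :=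
    (measurable_const.indicator hFmeas).sub (measurable_const.indicator hFmeas.compl)
  have hf_meas : Measurable f :=
    hg_meas.div (measurable_norm.pow measurable_const)
  set A : ℝ → Set (EuclideanSpace ℝ (Fin (m + n))) := fun δ => {x : EuclideanSpace ℝ (Fin (m + n)) | δ ≤ ‖x‖} with hA
  have hmeasA : ∀ δ : ℝ, MeasurableSet (A δ) :=
    fun δ => measurableSet_le measurable_const measurable_norm
  have hS_sub : S ⊆ A 2 := by
    intro x hx
    exact le_trans (le_of_lt hx) (aux19_coord_le k x)
  -- membership criterion for F
  have hmemF : ∀ y : EuclideanSpace ℝ (Fin (m + n)), y ∈ F ↔ 1 < ∑ j : Fin n,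
      (y (Fin.natAdd m j) + (if j = j0 then (1:ℝ) else 0)) ^ 2 := by
    intro y
    rw [hF]
    simp only [mem_setOf_eq]
    set t := ∑ j : Fin n, (y (Fin.natAdd m j) + (if j = j0 then (1:ℝ) else 0)) ^ 2 with ht
    have ht0 : 0 ≤ t := Finset.sum_nonneg fun j _ => sq_nonneg _
    constructor
    · intro h
      have := Real.sq_sqrt ht0
      nlinarith [Real.sqrt_nonneg t]
    · intro h
      have : (1:ℝ) < Real.sqrt t := by
        rw [Real.lt_sqrt (by norm_num)]
        simpa using h
      exact this
  have hsum_ge : ∀ y : EuclideanSpace ℝ (Fin (m + n)), (y k + 1) ^ 2 ≤ ∑ j : Fin n,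
      (y (Fin.natAdd m j) + (if j = j0 then (1:ℝ) else 0)) ^ 2 := by
    intro y
    have := Finset.single_le_sum
      (f := fun j : Fin n => (y (Fin.natAdd m j) + (if j = j0 then (1:ℝ) else 0)) ^ 2)
      (fun j _ => sq_nonneg _) (Finset.mem_univ j0)
    simpa [hk] using this
  have hσk : ∀ x : EuclideanSpace ℝ (Fin (m + n)), σ x k = -(x k) := by
    intro x
    rw [hσ_apply x k, if_pos rfl]
  -- integrability of f and f ∘ σ on A δ
  have hf_int : ∀ δ : ℝ, 0 < δ → IntegrableOn f (A δ) := by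
    intro δ hδ
    refine Integrable.mono' (aux19_tail hrN hδ) hf_meas.aestronglyMeasurable ?_
    refine (ae_restrict_iff' (hmeasA δ)).2 (Eventually.of_forall fun x hx => ?_)
    have hx0 : 0 < ‖x‖ := lt_of_lt_of_le hδ hx
    have ha : (0:ℝ) < ‖x‖ ^ r := Real.rpow_pos_of_pos hx0 r
    simp only [hf]
    rw [Real.norm_eq_abs, abs_div, abs_of_pos ha, Real.rpow_neg (norm_nonneg x),
      div_le_iff₀ ha, inv_mul_cancel₀ ha.ne']
    exact hgabs x
  have hfσ_int : ∀ δ : ℝ, 0 < δ → IntegrableOn (fun x => f (σ x)) (A δ) := by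
    intro δ hδ
    refine Integrable.mono' (aux19_tail hrN hδ)
      ((hf_meas.comp σ.continuous.measurable)).aestronglyMeasurable ?_
    refine (ae_restrict_iff' (hmeasA δ)).2 (Eventually.of_forall fun x hx => ?_)
    have hx0 : 0 < ‖x‖ := lt_of_lt_of_le hδ hx
    have ha : (0:ℝ) < ‖x‖ ^ r := Real.rpow_pos_of_pos hx0 r
    have hthis : f (σ x) = g (σ x) / ‖x‖ ^ r := by
      simp only [hf, hg, hσnorm]
    rw [hthis, Real.norm_eq_abs, abs_div, abs_of_pos ha, Real.rpow_neg (norm_nonneg x),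
      div_le_iff₀ ha, inv_mul_cancel₀ ha.ne']
    exact hgabs (σ x)
  -- change of variables
  have hchg : ∀ δ : ℝ, ∫ x in A δ, f (σ x) = ∫ x in A δ, f x := by
    intro δ
    have hpre : σ ⁻¹' (A δ) = A δ := by
      ext x
      simp only [mem_preimage, hA, mem_setOf_eq, hσnorm]
    calc ∫ x in A δ, f (σ x) = ∫ x in σ ⁻¹' (A δ), f (σ x) := by rw [hpre]
      _ = ∫ y in A δ, f y :=
        σ.measurePreserving.setIntegral_preimage_emb
          σ.toHomeomorph.measurableEmbedding f (A δ)
  -- pointwise key inequality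
  have hkey : ∀ (δ : ℝ), 0 < δ → ∀ x : EuclideanSpace ℝ (Fin (m + n)), x k ≠ 0 → δ ≤ ‖x‖ →
      S.indicator φ x ≤ (f x + f (σ x)) / 2 := by
    intro δ hδ x hxk hxA
    have hx0 : 0 < ‖x‖ := lt_of_lt_of_le hδ hxA
    have ha : (0:ℝ) < ‖x‖ ^ r := Real.rpow_pos_of_pos hx0 r
    have hsum : f x + f (σ x) = (g x + g (σ x)) / ‖x‖ ^ r := by
      simp only [hf, hg, hσnorm, ← add_div]
    by_cases hxS : x ∈ S
    · -- 2 < |x k| : both x and σ x are in F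
      have hxk2 : 2 < |x k| := hxS
      have hxF : x ∈ F := by
        rw [hmemF]
        have h1 : (1:ℝ) < (x k + 1) ^ 2 := by
          rcases lt_abs.1 hxk2 with h | h
          · nlinarith
          · nlinarith
        exact lt_of_lt_of_le h1 (hsum_ge x)
      have hσxF : σ x ∈ F := by
        rw [hmemF]
        have h1 : (1:ℝ) < (σ x k + 1) ^ 2 := by
          rw [hσk x]
          rcases lt_abs.1 hxk2 with h | h
          · nlinarith
          · nlinarith
        exact lt_of_lt_of_le h1 (hsum_ge (σ x))
      rw [indicator_of_mem hxS, hsum, hg1 x hxF, hg1 (σ x) hσxF]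
      simp only [hφ]
      rw [Real.rpow_neg (norm_nonneg x)]
      rw [show (1:ℝ) + 1 = 2 by norm_num, div_div, mul_comm, ← div_div,
        div_self (by norm_num : (2:ℝ) ≠ 0), one_div]
    · -- |x k| ≤ 2 : at least one of x, σ x is in F
      rw [indicator_of_notMem hxS, hsum]
      have hnum : 0 ≤ g x + g (σ x) := by
        by_cases hx1 : x ∈ F
        · by_cases hx2 : σ x ∈ F
          · rw [hg1 x hx1, hg1 (σ x) hx2]; norm_num
          · rw [hg1 x hx1, hg2 (σ x) hx2]; norm_num
        · by_cases hx2 : σ x ∈ F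
          · rw [hg2 x hx1, hg1 (σ x) hx2]; norm_num
          · exfalso
            have h1 : (x k + 1) ^ 2 ≤ 1 := by
              have := (hmemF x).not.1 hx1
              push_neg at this
              exact le_trans (hsum_ge x) this
            have h2 : (-(x k) + 1) ^ 2 ≤ 1 := by
              have := (hmemF (σ x)).not.1 hx2
              push_neg at this
              have h3 := le_trans (hsum_ge (σ x)) this
              rwa [hσk x] at h3
            apply hxk
            nlinarith [sq_nonneg (x k)]
      positivity
  -- the lower bound for each small δ
  have hmain : ∀ δ : ℝ, 0 < δ → δ < 2 →
      (∫ x in S, φ x) ≤ ∫ x in A δ, f x := by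
    intro δ hδ0 hδ2
    have hsubδ : S ⊆ A δ := fun x hx =>
      le_trans hδ2.le (le_trans (le_of_lt hx) (aux19_coord_le k x))
    have hφ_int : IntegrableOn φ (A δ) := aux19_tail hrN hδ0
    have hind_int : Integrable (S.indicator φ) (volume.restrict (A δ)) :=
      hφ_int.indicator hSmeas
    have hhalf_int : Integrable (fun x => (f x + f (σ x)) / 2) (volume.restrict (A δ)) :=
      ((hf_int δ hδ0).add (hfσ_int δ hδ0)).div_const 2
    have h1 : ∀ᵐ x : EuclideanSpace ℝ (Fin (m + n)) ∂volume, x k ≠ 0 := by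
      rw [ae_iff]
      convert aux19_null k using 2
      ext x
      simp
    have h1' : ∀ᵐ x ∂(volume.restrict (A δ)), x k ≠ 0 := ae_restrict_of_ae h1
    have h2 : ∀ᵐ x ∂(volume.restrict (A δ)), δ ≤ ‖x‖ :=
      (ae_restrict_iff' (hmeasA δ)).2 (Eventually.of_forall fun x hx => hx)
    have hae : ∀ᵐ x ∂(volume.restrict (A δ)), S.indicator φ x ≤ (f x + f (σ x)) / 2 := by
      filter_upwards [h1', h2] with x hx1 hx2 using hkey δ hδ0 x hx1 hx2
    have hmono := integral_mono_ae hind_int hhalf_int hae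
    have hL : ∫ x in A δ, S.indicator φ x = ∫ x in S, φ x := by
      rw [integral_indicator hSmeas, Measure.restrict_restrict hSmeas,
        inter_eq_self_of_subset_left hsubδ]
    have hR : ∫ x in A δ, (f x + f (σ x)) / 2 = ∫ x in A δ, f x := by
      rw [integral_div, integral_add (hf_int δ hδ0) (hfσ_int δ hδ0), hchg δ,
        add_self_div_two]
    rw [hL, hR] at hmono
    exact hmono
  constructor
  · -- first part: J ≤ I
    refine ge_of_tendsto hpv ?_
    filter_upwards [Ioo_mem_nhdsGT_of_mem (⟨le_refl (0:ℝ), two_pos⟩ : (0:ℝ) ∈ Ico (0:ℝ) 2)]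
      with δ hδ
    exact hmain δ hδ.1 hδ.2
  · -- second part: positivity
    have hint_S : IntegrableOn φ S := (aux19_tail hrN two_pos).mono_set hS_sub
    rw [setIntegral_pos_iff_support_of_nonneg_ae
      (Eventually.of_forall fun x => Real.rpow_nonneg (norm_nonneg x) _) hint_S]
    set c : EuclideanSpace ℝ (Fin (m + n)) := EuclideanSpace.single k (3:ℝ) with hc
    refine lt_of_lt_of_le (Metric.measure_ball_pos volume c one_pos) (measure_mono ?_)
    intro x hx
    have h2' : ‖x - c‖ < 1 := mem_ball_iff_norm.1 hx
    have h1' : |x k - 3| ≤ ‖x - c‖ := by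
      have h := aux19_coord_le k (x - c)
      have hxc : (x - c) k = x k - 3 := by
        simp [hc, EuclideanSpace.single_apply]
      rwa [hxc] at h
    have hxk : 2 < x k := by
      have := abs_lt.1 (lt_of_le_of_lt h1' h2')
      linarith [this.1]
    have hxS : x ∈ S := lt_of_lt_of_le hxk (le_abs_self _)
    have hx0 : 0 < ‖x‖ :=
      lt_of_lt_of_le (lt_trans two_pos (lt_of_lt_of_le hxk (le_abs_self _)))
        (aux19_coord_le k x)
    exact ⟨Function.mem_support.2 (Real.rpow_pos_of_pos hx0 _).ne', hxS⟩
end
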